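/- Let G be a second countable, unimodular, locally compact group with Haar measure, σ a 2-cocycle on G, Γ a lattice in G with Borel fundamental domain B of finite measure, and π a σ-projective irreducible square-integrable unitary representation of G on H with formal dimension d_π. Fix a unit vector η ∈ H, let p̃ be the orthogonal projection of L²(G) onto the (closed) range of the wavelet transform V_η, let (e_i)_i be an orthonormal basis of L²(B), and let ẽ_i be the zero-extension of e_i to G. Then Σ_i ‖p̃ ẽ_i‖² = d_π · vol(G/Γ), where vol(G/Γ) is the Haar measure of B. -/

import Mathlib

open MeasureTheory
open scoped ENNReal InnerProductSpace ComplexConjugate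

private lemma hasSum_norm_sq_inner_basis {E : Type*} [NormedAddCommGroup E]
    [InnerProductSpace ℂ E] {J : Type*} (b : HilbertBasis J ℂ E) (x : E) :
    HasSum (fun j => ‖⟪b j, x⟫_ℂ‖ ^ 2) (‖x‖ ^ 2) := by
  have h := (b.hasSum_inner_mul_inner x x).mapL Complex.reCLM
  have h1 : (fun j => Complex.reCLM (⟪x, b j⟫_ℂ * ⟪b j, x⟫_ℂ))
      = fun j => ‖⟪b j, x⟫_ℂ‖ ^ 2 := by
    funext j
    rw [Complex.reCLM_apply, ← inner_conj_symm x (b j), mul_comm]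
    rw [show ⟪b j, x⟫_ℂ * conj ⟪b j, x⟫_ℂ = (Complex.normSq ⟪b j, x⟫_ℂ : ℂ) from
      Complex.mul_conj _]
    rw [Complex.ofReal_re, Complex.normSq_eq_norm_sq]
  have h2 : Complex.reCLM ⟪x, x⟫_ℂ = ‖x‖ ^ 2 := by
    rw [Complex.reCLM_apply, inner_self_eq_norm_sq_to_K]
    norm_cast
  rwa [h1, h2] at h

private lemma tsum_ofReal_eq_of_hasSum {J : Type*} {f : J → ℝ} {a : ℝ}
    (h0 : ∀ j, 0 ≤ f j) (h : HasSum f a) :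
    ∑' j, ENNReal.ofReal (f j) = ENNReal.ofReal a := by
  rw [← ENNReal.ofReal_tsum_of_nonneg h0 h.summable, h.tsum_eq]

private lemma ofReal_norm_sq_L2 {α : Type*} {m : MeasurableSpace α} {ν : Measure α}
    (g : Lp ℂ 2 ν) :
    ENNReal.ofReal (‖g‖ ^ 2) = ∫⁻ x, (‖g x‖₊ : ℝ≥0∞) ^ 2 ∂ν := by
  have hpow : ∀ x : ℝ≥0∞, x ^ (2:ℝ) = x ^ (2:ℕ) := fun x => by
    rw [← ENNReal.rpow_natCast]; norm_num
  simp_rw [← hpow]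
  set I := ∫⁻ x, (‖g x‖₊ : ℝ≥0∞) ^ (2:ℝ) ∂ν with hIdef
  have hsn : eLpNorm g 2 ν = I ^ (1/2 : ℝ) := by
    rw [eLpNorm_eq_lintegral_rpow_enorm_toReal two_ne_zero ENNReal.ofNat_ne_top]
    norm_num [hIdef, enorm_eq_nnnorm]
  have hfin : eLpNorm g 2 ν ≠ ∞ := Lp.eLpNorm_ne_top g
  have hI : I ≠ ∞ := by
    intro h
    rw [h, ENNReal.top_rpow_of_pos (by norm_num)] at hsn
    exact hfin hsn
  have hnorm : ‖g‖ = I.toReal ^ (1/2 : ℝ) := by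
    rw [Lp.norm_def, hsn, ← ENNReal.toReal_rpow]
  rw [hnorm, ← Real.rpow_natCast (I.toReal ^ (1/2:ℝ)) 2, ← Real.rpow_mul ENNReal.toReal_nonneg]
  norm_num [ENNReal.ofReal_toReal hI]

/-- in the setting of a lattice `Γ` in `G` with fundamental domain `B` of
finite measure and a `σ`-projective irreducible square-integrable representation `π` with
formal dimension `d_π`, the projection `p̃` onto the closed range of the wavelet transform
`V_η` satisfies `∑_i ‖p̃ ẽ_i‖² = d_π ⬝ vol(G/Γ)`, where `vol(G/Γ) = μ(B)` and `ẽ_i` are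
the zero-extensions of an orthonormal basis of `L²(B)`. -/
theorem sum_sq_norm_wavelet_projection {G : Type*} [Group G]
    [TopologicalSpace G] [IsTopologicalGroup G] [LocallyCompactSpace G]
    [SecondCountableTopology G] [MeasurableSpace G] [BorelSpace G]
    (μ : Measure G) [μ.IsHaarMeasure] [μ.IsMulRightInvariant]
    (σ : G → G → ℂ)
    (hσ_unit : ∀ x y, ‖σ x y‖ = 1)
    (hσ_meas : Measurable fun p : G × G => σ p.1 p.2)
    (hσ_cocycle : ∀ x y z, σ x y * σ (x * y) z = σ x (y * z) * σ y z)
    (hσ_one : σ 1 1 = 1)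
    -- Γ is a lattice with Borel fundamental domain B of finite measure
    (Γ : Subgroup G) [DiscreteTopology Γ]
    (B : Set G) (hBmeas : MeasurableSet B)
    (hB : ∀ x : G, ∃! γ : Γ, (γ : G)⁻¹ * x ∈ B) (hBfin : μ B ≠ ∞)
    -- π is a σ-projective irreducible square-integrable unitary representation on H
    {H : Type*} [NormedAddCommGroup H] [InnerProductSpace ℂ H] [CompleteSpace H]
    (π : G → (H →L[ℂ] H))
    (hπ_mul : ∀ x y : G, (π x).comp (π y) = σ x y • π (x * y))
    (hπ_unitary : ∀ (x : G) (ξ ζ : H), ⟪π x ξ, π x ζ⟫_ℂ = ⟪ξ, ζ⟫_ℂ)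
    (hπ_cont : ∀ ξ : H, Continuous fun x : G => π x ξ)
    (dπ : ℝ) (hdπ : 0 < dπ)
    (hortho : ∀ ξ ξ' ζ ζ' : H,
      ∫ x, ⟪π x ζ, ξ⟫_ℂ * conj ⟪π x ζ', ξ'⟫_ℂ ∂μ
        = (dπ : ℂ)⁻¹ * ⟪ξ', ξ⟫_ℂ * conj ⟪ζ', ζ⟫_ℂ)
    -- the wavelet transform V = V_η with respect to a unit vector η
    (η : H) (hη : ‖η‖ = 1)
    (V : H →L[ℂ] Lp ℂ 2 μ)
    (hV : ∀ ξ : H, (V ξ : G → ℂ) =ᵐ[μ] fun x => ⟪π x η, ξ⟫_ℂ)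
    -- an orthonormal basis (e_i) of L²(B) and its zero-extensions ẽ_i
    {ι : Type*} (e : HilbertBasis ι ℂ (Lp ℂ 2 (μ.restrict B)))
    (te : ι → Lp ℂ 2 μ)
    (hte : ∀ i : ι, (te i : G → ℂ) =ᵐ[μ] B.indicator (e i : G → ℂ))
    -- p̃ is the orthogonal projection of L²(G) onto the closure of the range of V
    (p : Lp ℂ 2 μ →L[ℂ] Lp ℂ 2 μ)
    (hp_mem : ∀ f : Lp ℂ 2 μ,
      p f ∈ (LinearMap.range (V : H →ₗ[ℂ] Lp ℂ 2 μ)).topologicalClosure)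
    (hp_orth : ∀ f g : Lp ℂ 2 μ,
      g ∈ (LinearMap.range (V : H →ₗ[ℂ] Lp ℂ 2 μ)).topologicalClosure →
        ⟪f - p f, g⟫_ℂ = 0) :
    ∑' i : ι, ‖p (te i)‖ ^ 2 = dπ * (μ B).toReal := by

  classical
  haveI : Fact ((1:ℝ≥0∞) ≤ 2) := ⟨one_le_two⟩
  haveI : Fact ((2:ℝ≥0∞) ≠ ⊤) := ⟨ENNReal.ofNat_ne_top⟩
  -- Step 1: V is a multiple of an isometry
  have hVV : ∀ ξ ζ : H, ⟪V ξ, V ζ⟫_ℂ = (dπ:ℂ)⁻¹ * ⟪ξ, ζ⟫_ℂ := by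
    intro ξ ζ
    rw [L2.inner_def]
    have hcongr : (fun a => ⟪(V ξ : G → ℂ) a, (V ζ : G → ℂ) a⟫_ℂ)
        =ᵐ[μ] fun a => ⟪π a η, ζ⟫_ℂ * conj ⟪π a η, ξ⟫_ℂ := by
      filter_upwards [hV ξ, hV ζ] with a h1 h2
      rw [RCLike.inner_apply, h1, h2]
    rw [integral_congr_ae hcongr, hortho ζ ξ η η, inner_self_eq_norm_sq_to_K, hη]
    norm_num
  have hVnorm : ∀ ξ : H, ‖V ξ‖ ^ 2 = dπ⁻¹ * ‖ξ‖ ^ 2 := by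
    intro ξ
    have h1 : ‖V ξ‖ ^ 2 = RCLike.re ⟪V ξ, V ξ⟫_ℂ := norm_sq_eq_re_inner (𝕜 := ℂ) (V ξ)
    rw [h1, hVV ξ ξ, inner_self_eq_norm_sq_to_K]
    norm_cast
    simp [RCLike.mul_re]
    left
    norm_cast
  have hdπ' : dπ ≠ 0 := ne_of_gt hdπ
  -- Step 2: the adjoint of V and the formula for p
  set A := ContinuousLinearMap.adjoint V with hA
  have hpf : ∀ f : Lp ℂ 2 μ, p f = (dπ:ℂ) • V (A f) := by
    intro f
    set q := (dπ:ℂ) • V (A f) with hq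
    set K := (LinearMap.range (V : H →ₗ[ℂ] Lp ℂ 2 μ)).topologicalClosure with hK
    have hqK : q ∈ K :=
      Submodule.smul_mem _ _ (Submodule.le_topologicalClosure _ ⟨A f, rfl⟩)
    have horth : ∀ g ∈ K, ⟪f - q, g⟫_ℂ = 0 := by
      intro g hg
      have hle : LinearMap.range (V : H →ₗ[ℂ] Lp ℂ 2 μ) ≤ (ℂ ∙ (f - q))ᗮ := by
        rintro _ ⟨ξ, rfl⟩
        rw [Submodule.mem_orthogonal_singleton_iff_inner_right]
        show ⟪f - q, V ξ⟫_ℂ = 0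
        rw [inner_sub_left, hq, inner_smul_left, hVV, ContinuousLinearMap.adjoint_inner_left,
          Complex.conj_ofReal]
        have : (dπ:ℂ) ≠ 0 := by exact_mod_cast hdπ'
        field_simp
        ring
      have hKle : K ≤ (ℂ ∙ (f - q))ᗮ :=
        Submodule.topologicalClosure_minimal _ hle (Submodule.isClosed_orthogonal _)
      exact Submodule.mem_orthogonal_singleton_iff_inner_right.mp (hKle hg)
    have hmemK : p f - q ∈ K := Submodule.sub_mem _ (hp_mem f) hqK
    have h1 : ⟪f - p f, p f - q⟫_ℂ = 0 := hp_orth f _ hmemK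
    have h2 : ⟪f - q, p f - q⟫_ℂ = 0 := horth _ hmemK
    have h3 : ⟪p f - q, p f - q⟫_ℂ = 0 := by
      have hid : (f - q) - (f - p f) = p f - q := by abel
      nth_rewrite 1 [← hid]
      rw [inner_sub_left, h1, h2, sub_zero]
    exact sub_eq_zero.mp (inner_self_eq_zero.mp h3)
  have hpn : ∀ f : Lp ℂ 2 μ, ‖p f‖ ^ 2 = dπ * ‖A f‖ ^ 2 := by
    intro f
    rw [hpf f, norm_smul, mul_pow, hVnorm, Complex.norm_real, Real.norm_eq_abs,
      abs_of_pos hdπ]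
    field_simp
  -- Step 3: H is second countable, hence admits a countable Hilbert basis
  have hWnorm : ∀ ξ : H, ‖((Real.sqrt dπ : ℂ) • V) ξ‖ = ‖ξ‖ := by
    intro ξ
    have h2 : ‖((Real.sqrt dπ : ℂ) • V) ξ‖ ^ 2 = ‖ξ‖ ^ 2 := by
      rw [ContinuousLinearMap.smul_apply, norm_smul, mul_pow, hVnorm, Complex.norm_real,
        Real.norm_eq_abs, abs_of_nonneg (Real.sqrt_nonneg _), Real.sq_sqrt hdπ.le]
      field_simp
    have h3 := congrArg Real.sqrt h2
    rwa [Real.sqrt_sq (norm_nonneg _), Real.sqrt_sq (norm_nonneg _)] at h3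
  have hWisom : Isometry (((Real.sqrt dπ : ℂ) • V : H →L[ℂ] Lp ℂ 2 μ)) :=
    AddMonoidHomClass.isometry_of_norm _ hWnorm
  haveI : SecondCountableTopology H := hWisom.isEmbedding.secondCountableTopology
  obtain ⟨w, b, hbcoe⟩ := exists_hilbertBasis ℂ H
  haveI : Countable w := by
    have hdist : ∀ i j : w, i ≠ j → (1:ℝ) ≤ dist (b i) (b j) := by
      intro i j hij
      have hnsq : ‖b i - b j‖ ^ 2 = 2 := by
        rw [@norm_sub_sq ℂ, b.orthonormal.1 i, b.orthonormal.1 j, b.orthonormal.2 hij]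
        norm_num
      have hd : dist (b i) (b j) = ‖b i - b j‖ := dist_eq_norm _ _
      nlinarith [dist_nonneg (x := (b i : H)) (y := b j)]
    have hdisj : Pairwise (Function.onFun Disjoint fun j : w => Metric.ball (b j) (1/2)) := by
      intro i j hij
      exact Metric.ball_disjoint_ball (by linarith [hdist i j hij])
    exact hdisj.countable_of_isOpen_disjoint (fun i => Metric.isOpen_ball)
      (fun i => ⟨b i, Metric.mem_ball_self (by norm_num)⟩)
  -- Step 4: restrictions of V (b j) to B
  have hmem : ∀ j : w, MemLp (V (b j) : G → ℂ) 2 (μ.restrict B) :=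
    fun j => (Lp.memLp (V (b j))).restrict B
  set r : w → Lp ℂ 2 (μ.restrict B) := fun j => MemLp.toLp _ (hmem j) with hr
  have hinner : ∀ (i : ι) (j : w), ⟪te i, V (b j)⟫_ℂ = ⟪e i, r j⟫_ℂ := by
    intro i j
    rw [L2.inner_def, L2.inner_def]
    have h1 : (fun a => ⟪(te i : G → ℂ) a, (V (b j) : G → ℂ) a⟫_ℂ)
        =ᵐ[μ] B.indicator (fun a => conj ((e i : G → ℂ) a) * (V (b j) : G → ℂ) a) := by
      filter_upwards [hte i] with a ha
      rw [RCLike.inner_apply, ha]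
      by_cases h : a ∈ B <;> simp [h, mul_comm]
    rw [integral_congr_ae h1, integral_indicator hBmeas]
    have h2 : (fun a => ⟪(e i : G → ℂ) a, (r j : G → ℂ) a⟫_ℂ)
        =ᵐ[μ.restrict B] fun a => conj ((e i : G → ℂ) a) * (V (b j) : G → ℂ) a := by
      filter_upwards [MemLp.coeFn_toLp (hmem j)] with a ha
      rw [RCLike.inner_apply, ha, mul_comm]
    rw [integral_congr_ae h2]
  -- Step 5: double sums
  set F : ι → w → ℝ≥0∞ := fun i j => ENNReal.ofReal (‖⟪te i, V (b j)⟫_ℂ‖ ^ 2) with hF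
  have hrow : ∀ i : ι, ∑' j : w, F i j = ENNReal.ofReal (‖A (te i)‖ ^ 2) := by
    intro i
    have hs := hasSum_norm_sq_inner_basis b (A (te i))
    have heq : (fun j : w => ‖⟪b j, A (te i)⟫_ℂ‖ ^ 2)
        = fun j : w => ‖⟪te i, V (b j)⟫_ℂ‖ ^ 2 := by
      funext j
      rw [norm_inner_symm, ContinuousLinearMap.adjoint_inner_left]
    rw [heq] at hs
    exact tsum_ofReal_eq_of_hasSum (fun j => by positivity) hs
  have hcol : ∀ j : w, ∑' i : ι, F i j = ENNReal.ofReal (‖r j‖ ^ 2) := by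
    intro j
    have hs := hasSum_norm_sq_inner_basis e (r j)
    have heq : (fun i : ι => F i j) = fun i : ι => ENNReal.ofReal (‖⟪e i, r j⟫_ℂ‖ ^ 2) := by
      funext i
      show ENNReal.ofReal (‖⟪te i, V (b j)⟫_ℂ‖ ^ 2) = _
      rw [hinner i j]
    rw [heq]
    exact tsum_ofReal_eq_of_hasSum (fun i => by positivity) hs
  -- Step 6: summing the column sums gives μ B
  have hmeas_j : ∀ j : w,
      AEMeasurable (fun x => (‖(V (b j) : G → ℂ) x‖₊ : ℝ≥0∞) ^ 2) (μ.restrict B) :=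
    fun j => ((Lp.aestronglyMeasurable (V (b j))).restrict.enorm).pow_const 2
  have hrj : ∀ j : w, ENNReal.ofReal (‖r j‖ ^ 2)
      = ∫⁻ x, (‖(V (b j) : G → ℂ) x‖₊ : ℝ≥0∞) ^ 2 ∂(μ.restrict B) := by
    intro j
    rw [ofReal_norm_sq_L2 (r j)]
    apply lintegral_congr_ae
    filter_upwards [MemLp.coeFn_toLp (hmem j)] with x hx
    rw [hx]
  have hae : ∀ᵐ x ∂(μ.restrict B),
      ∑' j : w, (‖(V (b j) : G → ℂ) x‖₊ : ℝ≥0∞) ^ 2 = 1 := by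
    have h1 : ∀ᵐ x ∂μ, ∀ j : w, (V (b j) : G → ℂ) x = ⟪π x η, b j⟫_ℂ :=
      ae_all_iff.mpr fun j => hV (b j)
    filter_upwards [ae_restrict_of_ae h1] with x hx
    have hπx : ‖π x η‖ ^ 2 = 1 := by
      have hu : ‖π x η‖ ^ 2 = RCLike.re ⟪π x η, π x η⟫_ℂ := norm_sq_eq_re_inner (𝕜 := ℂ) (π x η)
      rw [hu, hπ_unitary x η η, inner_self_eq_norm_sq_to_K, hη]
      norm_num
    have hs := hasSum_norm_sq_inner_basis b (π x η)
    calc ∑' j : w, (‖(V (b j) : G → ℂ) x‖₊ : ℝ≥0∞) ^ 2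
        = ∑' j : w, ENNReal.ofReal (‖⟪b j, π x η⟫_ℂ‖ ^ 2) := by
          apply tsum_congr
          intro j
          rw [hx j, ← norm_inner_symm (π x η), ENNReal.ofReal_pow (norm_nonneg _),
            ofReal_norm, enorm_eq_nnnorm]
      _ = ENNReal.ofReal (‖π x η‖ ^ 2) := tsum_ofReal_eq_of_hasSum (fun j => by positivity) hs
      _ = 1 := by rw [hπx, ENNReal.ofReal_one]
  have hsum_r : ∑' j : w, ENNReal.ofReal (‖r j‖ ^ 2) = μ B := by
    calc ∑' j : w, ENNReal.ofReal (‖r j‖ ^ 2)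
        = ∑' j : w, ∫⁻ x, (‖(V (b j) : G → ℂ) x‖₊ : ℝ≥0∞) ^ 2 ∂(μ.restrict B) :=
          tsum_congr hrj
      _ = ∫⁻ x, ∑' j : w, (‖(V (b j) : G → ℂ) x‖₊ : ℝ≥0∞) ^ 2 ∂(μ.restrict B) :=
          (lintegral_tsum hmeas_j).symm
      _ = ∫⁻ _, 1 ∂(μ.restrict B) := lintegral_congr_ae hae
      _ = μ B := by rw [lintegral_one, Measure.restrict_apply_univ]
  -- Step 7: put everything together in ℝ≥0∞
  have key : ∑' i : ι, ENNReal.ofReal (‖p (te i)‖ ^ 2) = ENNReal.ofReal dπ * μ B := by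
    calc ∑' i : ι, ENNReal.ofReal (‖p (te i)‖ ^ 2)
        = ∑' i : ι, ENNReal.ofReal dπ * ENNReal.ofReal (‖A (te i)‖ ^ 2) := by
          apply tsum_congr; intro i
          rw [hpn (te i), ENNReal.ofReal_mul hdπ.le]
      _ = ENNReal.ofReal dπ * ∑' i : ι, ENNReal.ofReal (‖A (te i)‖ ^ 2) :=
          ENNReal.tsum_mul_left
      _ = ENNReal.ofReal dπ * ∑' i : ι, ∑' j : w, F i j := by
          rw [tsum_congr hrow]
      _ = ENNReal.ofReal dπ * ∑' j : w, ∑' i : ι, F i j := by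
          rw [ENNReal.tsum_comm]
      _ = ENNReal.ofReal dπ * ∑' j : w, ENNReal.ofReal (‖r j‖ ^ 2) := by
          rw [tsum_congr hcol]
      _ = ENNReal.ofReal dπ * μ B := by rw [hsum_r]
  have hterm : ∀ i : ι, ENNReal.ofReal (‖p (te i)‖ ^ 2) ≠ ∞ := fun i => ENNReal.ofReal_ne_top
  calc ∑' i : ι, ‖p (te i)‖ ^ 2
      = ∑' i : ι, (ENNReal.ofReal (‖p (te i)‖ ^ 2)).toReal := by
        apply tsum_congr; intro i
        rw [ENNReal.toReal_ofReal (by positivity)]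
    _ = (∑' i : ι, ENNReal.ofReal (‖p (te i)‖ ^ 2)).toReal := (ENNReal.tsum_toReal_eq hterm).symm
    _ = (ENNReal.ofReal dπ * μ B).toReal := by rw [key]
    _ = dπ * (μ B).toReal := by rw [ENNReal.toReal_mul, ENNReal.toReal_ofReal hdπ.le]
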